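/- Let P and Q be Dyck paths of the same size n, encoded as sequences in {U, D}^{2n} with equal numbers of U's and D's and all prefixes having at least as many U's as D's. For each up step u of P, let ℓ_P(u) be the size (number of up steps) of the shortest factor of P starting at u that is itself a Dyck path (the 'excursion' of u), and define D_P: {1,…,n} → {1,…,n} by D_P(i) = ℓ_P(u_i) where u_i is the i-th up step. If D obtained from P by a Tamari rotation — i.e., Q is obtained from P by swapping a down step d of P with the excursion S of the up step u immediately following d — then D_Q(i) = D_P(i) for all i except the rank i₀ of the up step matched with d in P, where D_Q(i₀) = D_P(i₀) + ℓ_P(u). -/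

import Mathlib

/-! ### Height function infrastructure -/

/-- Total height (number of ups minus downs) of a word. -/
def sht (w : List Bool) : ℤ := (w.count true : ℤ) - (w.count false : ℤ)

/-- Height after `k` steps. -/
def ht (w : List Bool) (k : ℕ) : ℤ := sht (w.take k)

lemma sht_append (u v : List Bool) : sht (u ++ v) = sht u + sht v := by
  simp [sht, List.count_append]; ring

lemma sht_cons (b : Bool) (w : List Bool) :
    sht (b :: w) = (if b then 1 else -1) + sht w := by
  cases b <;> simp [sht, List.count_cons] <;> ring

lemma count_add_count (w : List Bool) : w.count true + w.count false = w.length := by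
  induction w with
  | nil => simp
  | cons b w ih => cases b <;> simp [List.count_cons] <;> omega

lemma sht_add_length (w : List Bool) : sht w + w.length = 2 * (w.count true : ℤ) := by
  have := count_add_count w
  simp only [sht]
  omega

lemma ht_zero (w : List Bool) : ht w 0 = 0 := by simp [ht, sht]

lemma ht_stable (w : List Bool) {k : ℕ} (h : w.length ≤ k) : ht w k = sht w := by
  simp [ht, List.take_of_length_le h]

/-! ### Dyck words -/

/-- A Dyck word: a list over Bool (`true` = up step U, `false` = down step D) with equally
many U's and D's, every prefix having at least as many U's as D's. -/
def IsDyckWord (w : List Bool) : Prop :=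
  w.count true = w.count false ∧ ∀ k, (w.take k).count false ≤ (w.take k).count true

/-- The length (number of steps) of the excursion of the up step at position j of w:
the length of the shortest nonempty factor of w starting at position j that is a Dyck word. -/
noncomputable def excLen (w : List Bool) (j : ℕ) : ℕ :=
  sInf {L | 0 < L ∧ IsDyckWord ((w.drop j).take L)}

/-- The positions of the up steps of w, in increasing order. -/
def upPos (w : List Bool) : List ℕ :=
  (List.range w.length).filter fun j => w.getD j false = true

/-- The distance function: `distFn w i` is the size (number of up steps, i.e. half the
length) of the excursion of the (i+1)-st up step of w. -/
noncomputable def distFn (w : List Bool) (i : ℕ) : ℕ :=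
  excLen w ((upPos w).getD i 0) / 2

lemma isDyck_iff (w : List Bool) : IsDyckWord w ↔ sht w = 0 ∧ ∀ k, 0 ≤ ht w k := by
  unfold IsDyckWord ht sht
  constructor
  · rintro ⟨h1, h2⟩
    exact ⟨by omega, fun k => by have := h2 k; omega⟩
  · rintro ⟨h1, h2⟩
    refine ⟨?_, fun k => by have := h2 k; omega⟩
    have := h2 w.length
    simp only [List.take_length] at this h1 ⊢
    omega

lemma ht_succ (w : List Bool) {k : ℕ} (h : k < w.length) :
    ht w (k+1) = ht w k + (if w.getD k false then 1 else -1) := by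
  have h' : w.take (k+1) = w.take k ++ [w[k]] := by
    rw [List.take_succ, List.getElem?_eq_getElem h]; rfl
  simp only [ht, h', sht_append]
  rw [List.getD_eq_getElem w false h]
  cases hb : w[k] <;> simp [sht, hb]

lemma ht_succ_ge (w : List Bool) (k : ℕ) : ht w k - 1 ≤ ht w (k+1) := by
  rcases Nat.lt_or_ge k w.length with h | h
  · rw [ht_succ w h]; split <;> omega
  · rw [ht_stable w h, ht_stable w (by omega)]; omega

lemma exists_ht_eq (w : List Bool) {p q : ℕ} {c : ℤ} (hpq : p ≤ q)
    (h1 : c ≤ ht w p) (h2 : ht w q ≤ c) :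
    ∃ m, p ≤ m ∧ m ≤ q ∧ ht w m = c := by
  classical
  have hex : ∃ m, p ≤ m ∧ ht w m ≤ c := ⟨q, hpq, h2⟩
  have hpM := (Nat.find_spec hex).1
  have hMc := (Nat.find_spec hex).2
  have hMq : Nat.find hex ≤ q := Nat.find_min' hex ⟨hpq, h2⟩
  refine ⟨Nat.find hex, hpM, hMq, ?_⟩
  rcases Nat.eq_or_lt_of_le hpM with h | h
  · rw [← h] at hMc ⊢; omega
  · obtain ⟨M', hM'⟩ : ∃ M', Nat.find hex = M' + 1 := ⟨Nat.find hex - 1, by omega⟩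
    have hmin : ¬(p ≤ M' ∧ ht w M' ≤ c) := Nat.find_min hex (by omega)
    have h3 : c < ht w M' := by
      rcases le_or_gt (ht w M') c with h4 | h4
      · exact absurd ⟨by omega, h4⟩ hmin
      · exact h4
    have h5 := ht_succ_ge w M'
    rw [hM'] at hMc ⊢
    omega

/-! ### First return of the height function -/

/-- First position strictly after `j` where the height returns to its value at `j`. -/
noncomputable def fr (w : List Bool) (j : ℕ) : ℕ := sInf {e | j < e ∧ ht w e = ht w j}

lemma fr_mem (w : List Bool) {j : ℕ} (hne : ∃ e, j < e ∧ ht w e = ht w j) :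
    j < fr w j ∧ ht w (fr w j) = ht w j :=
  Nat.sInf_mem hne

lemma fr_le (w : List Bool) {j m : ℕ} (h : j < m) (h2 : ht w m = ht w j) : fr w j ≤ m :=
  Nat.sInf_le ⟨h, h2⟩

lemma fr_eq (w : List Bool) {j e : ℕ} (hje : j < e) (he : ht w e = ht w j)
    (hmin : ∀ m, j < m → m < e → ht w m ≠ ht w j) : fr w j = e := by
  have h1 : fr w j ≤ e := fr_le w hje he
  obtain ⟨h2, h3⟩ := fr_mem w ⟨e, hje, he⟩
  rcases Nat.eq_or_lt_of_le h1 with h | h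
  · exact h
  · exact absurd h3 (hmin _ h2 h)

lemma fr_above (w : List Bool) {j : ℕ} (hj : j < w.length) (hu : w.getD j false = true)
    {m : ℕ} (h1 : j < m) (h2 : m < fr w j) : ht w j < ht w m := by
  induction m with
  | zero => omega
  | succ m ih =>
    have hne : ht w (m+1) ≠ ht w j := by
      have := Nat.notMem_of_lt_sInf (s := {e | j < e ∧ ht w e = ht w j}) h2
      simp only [Set.mem_setOf_eq, not_and] at this
      exact this (by omega)
    rcases Nat.lt_or_ge j m with h | h
    · have := ih h (by omega)
      have := ht_succ_ge w m
      omega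
    · have hjm : m = j := by omega
      subst hjm
      rw [ht_succ w hj, hu]
      simp

lemma fr_nonempty (w : List Bool) {j : ℕ} (hj : j < w.length) (hu : w.getD j false = true)
    (hend : sht w ≤ ht w j) : ∃ e, j < e ∧ e ≤ w.length ∧ ht w e = ht w j := by
  have h1 : ht w (j+1) = ht w j + 1 := by rw [ht_succ w hj, hu]; simp
  obtain ⟨m, hm1, hm2, hm3⟩ := exists_ht_eq w (p := j+1) (q := w.length) (c := ht w j)
    (by omega) (by omega) (by rw [ht_stable w (le_refl _)]; exact hend)
  exact ⟨m, by omega, hm2, hm3⟩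

/-! ### Excursions via heights -/

lemma ht_drop (w : List Bool) (j u : ℕ) :
    sht ((w.drop j).take u) = ht w (j + u) - ht w j := by
  have h : w.take (j+u) = w.take j ++ (w.drop j).take u := List.take_add (l := w) (i := j) (j := u)
  rw [ht, h, sht_append, ht]; ring

lemma isDyck_factor (w : List Bool) (j L : ℕ) :
    IsDyckWord ((w.drop j).take L) ↔
      ht w (j+L) = ht w j ∧ ∀ t ≤ L, ht w j ≤ ht w (j+t) := by
  rw [isDyck_iff]
  have key : ∀ t, ht ((w.drop j).take L) t = ht w (j + min t L) - ht w j := by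
    intro t
    rw [ht, List.take_take, ht_drop]
  constructor
  · rintro ⟨h1, h2⟩
    rw [ht_drop] at h1
    refine ⟨by omega, fun t hts => ?_⟩
    have := h2 t
    rw [key t, min_eq_left hts] at this
    omega
  · rintro ⟨h1, h2⟩
    refine ⟨by rw [ht_drop]; omega, fun t => ?_⟩
    rw [key t]
    have := h2 (min t L) (min_le_right _ _)
    omega

lemma excLen_spec (w : List Bool) {j : ℕ} (hj : j < w.length) (hu : w.getD j false = true)
    (hend : sht w ≤ ht w j) :
    fr w j = j + excLen w j ∧ 0 < excLen w j ∧ j + excLen w j ≤ w.length := by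
  obtain ⟨e₀, he₀1, he₀2, he₀3⟩ := fr_nonempty w hj hu hend
  have hfr_le : fr w j ≤ e₀ := fr_le w he₀1 he₀3
  obtain ⟨hfr1, hfr2⟩ := fr_mem w ⟨e₀, he₀1, he₀3⟩
  have hmem : 0 < fr w j - j ∧ IsDyckWord ((w.drop j).take (fr w j - j)) := by
    refine ⟨by omega, (isDyck_factor w j (fr w j - j)).2 ⟨?_, ?_⟩⟩
    · rw [show j + (fr w j - j) = fr w j by omega]; exact hfr2
    · intro t ht'
      rcases Nat.eq_or_lt_of_le (Nat.zero_le t) with h0 | h0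
      · simp [← h0]
      · rcases Nat.eq_or_lt_of_le ht' with h1 | h1
        · rw [h1, show j + (fr w j - j) = fr w j by omega, hfr2]
        · exact le_of_lt (fr_above w hj hu (by omega) (by omega))
  have hmin : ∀ L ∈ {L | 0 < L ∧ IsDyckWord ((w.drop j).take L)}, fr w j - j ≤ L := by
    rintro L ⟨hL0, hLd⟩
    have h1 := ((isDyck_factor w j L).1 hLd).1
    have h2 : fr w j ≤ j + L := fr_le w (by omega) h1
    omega
  have hex : excLen w j = fr w j - j := by
    apply le_antisymm
    · exact Nat.sInf_le hmem
    · exact hmin _ (Nat.sInf_mem ⟨fr w j - j, hmem⟩)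
  exact ⟨by omega, by omega, by omega⟩

lemma excLen_even (w : List Bool) {j : ℕ} (hj : j < w.length) (hu : w.getD j false = true)
    (hend : sht w ≤ ht w j) : 2 ∣ excLen w j := by
  obtain ⟨h1, h2, h3⟩ := excLen_spec w hj hu hend
  obtain ⟨e₀, he₀1, he₀2, he₀3⟩ := fr_nonempty w hj hu hend
  obtain ⟨hfr1, hfr2⟩ := fr_mem w ⟨e₀, he₀1, he₀3⟩
  rw [h1] at hfr2
  have e1 := sht_add_length (w.take (j + excLen w j))
  have e2 := sht_add_length (w.take j)
  rw [List.length_take, min_eq_left h3] at e1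
  rw [List.length_take, min_eq_left (by omega : j ≤ w.length)] at e2
  rw [ht, ht] at hfr2
  obtain ⟨m, hm⟩ : ∃ m : ℕ, excLen w j = 2 * m := by
    refine ⟨(w.take (j + excLen w j)).count true - (w.take j).count true, ?_⟩
    omega
  exact ⟨m, hm⟩

/-! ### upPos infrastructure -/

lemma upPos_cons (b : Bool) (w : List Bool) :
    upPos (b :: w) = (if b then [0] else []) ++ (upPos w).map (· + 1) := by
  unfold upPos
  rw [List.length_cons, List.range_succ_eq_map, List.filter_cons, List.filter_map]
  have h2 : List.filter ((fun j => decide ((b :: w).getD j false = true)) ∘ Nat.succ)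
      (List.range w.length)
      = List.filter (fun j => decide (w.getD j false = true)) (List.range w.length) := by
    apply List.filter_congr
    intro a _
    simp
  rw [h2]
  have h3 : Nat.succ = (· + 1) := by funext x; rfl
  rw [h3]
  cases b <;> simp

lemma upPos_append (u v : List Bool) :
    upPos (u ++ v) = upPos u ++ (upPos v).map (· + u.length) := by
  induction u with
  | nil => simp [upPos]
  | cons b u ih =>
    rw [List.cons_append, upPos_cons, upPos_cons, ih, List.map_append, List.map_map]
    cases b <;> simp [List.map_map, Function.comp, Nat.add_assoc, Nat.add_comm 1 u.length]

lemma upPos_length (w : List Bool) : (upPos w).length = w.count true := by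
  induction w with
  | nil => simp [upPos]
  | cons b w ih => cases b <;> simp [upPos_cons, ih, List.count_cons]

lemma mem_upPos {w : List Bool} {j : ℕ} : j ∈ upPos w ↔ j < w.length ∧ w.getD j false = true := by
  simp [upPos, List.mem_filter, List.mem_range]

lemma upPos_pairwise (w : List Bool) : (upPos w).Pairwise (· < ·) :=
  List.pairwise_lt_range.filter _

/-! ### Decompositions for the rotation -/

section
variable (A S B : List Bool)

lemma take_P_mid {t : ℕ} (h : t ≤ S.length) :
    (A ++ false :: (S ++ B)).take (A.length + 1 + t) = A ++ false :: S.take t := by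
  rw [show A.length + 1 + t = A.length + (t + 1) by ring, List.take_length_add_append,
    List.take_succ_cons, List.take_append_of_le_length h]

lemma htP_low {k : ℕ} (h : k ≤ A.length) : ht (A ++ false :: (S ++ B)) k = ht A k := by
  unfold ht; rw [List.take_append_of_le_length h]

lemma htQ_low {k : ℕ} (h : k ≤ A.length) : ht (A ++ S ++ false :: B) k = ht A k := by
  unfold ht
  rw [List.append_assoc, List.take_append_of_le_length h]

lemma htP_mid {t : ℕ} (h : t ≤ S.length) :
    ht (A ++ false :: (S ++ B)) (A.length + 1 + t) = sht A - 1 + ht S t := by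
  unfold ht
  rw [take_P_mid A S B h, sht_append, sht_cons]
  simp; ring

lemma htQ_mid {t : ℕ} (h : t ≤ S.length) :
    ht (A ++ S ++ false :: B) (A.length + t) = sht A + ht S t := by
  unfold ht
  rw [List.append_assoc, List.take_length_add_append, List.take_append_of_le_length h, sht_append]

lemma htP_high (r : ℕ) :
    ht (A ++ false :: (S ++ B)) (A.length + 1 + S.length + r) = sht A - 1 + sht S + ht B r := by
  unfold ht
  rw [show A.length + 1 + S.length + r = A.length + (S.length + r + 1) by ring,
    List.take_length_add_append, List.take_succ_cons, List.take_length_add_append, sht_append, sht_cons, sht_append]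
  simp; ring

lemma htQ_high (r : ℕ) :
    ht (A ++ S ++ false :: B) (A.length + 1 + S.length + r) = sht A + sht S - 1 + ht B r := by
  unfold ht
  rw [show A.length + 1 + S.length + r = (A ++ S).length + (r + 1) by simp; ring,
    List.take_length_add_append, List.take_succ_cons, sht_append, sht_cons, sht_append]
  simp; ring

lemma upPos_P_dec :
    upPos (A ++ false :: (S ++ B)) = upPos A ++
      ((upPos S).map (fun t => A.length + 1 + t) ++
       (upPos B).map (fun r => A.length + 1 + S.length + r)) := by
  rw [upPos_append, upPos_cons, upPos_append]
  simp only [if_neg (by simp : ¬ (false = true)), List.nil_append, List.map_append,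
    List.map_map]
  congr 2
  · apply congrArg (List.map · (upPos S)); funext t; simp [Function.comp]; omega
  · apply congrArg (List.map · (upPos B)); funext r; simp [Function.comp]; omega

lemma upPos_Q_dec :
    upPos (A ++ S ++ false :: B) = upPos A ++
      ((upPos S).map (fun t => A.length + t) ++
       (upPos B).map (fun r => A.length + 1 + S.length + r)) := by
  rw [List.append_assoc, upPos_append, upPos_append, upPos_cons]
  simp only [if_neg (by simp : ¬ (false = true)), List.nil_append, List.map_append,
    List.map_map, List.append_assoc]
  congr 2
  · apply congrArg (List.map · (upPos S)); funext t; omega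
  · apply congrArg (List.map · (upPos B)); funext r; simp [Function.comp]; omega

end

lemma getD_map_nat (f : ℕ → ℕ) (l : List ℕ) {i : ℕ} (h : i < l.length) :
    (l.map f).getD i 0 = f (l.getD i 0) := by
  rw [List.getD_eq_getElem _ _ (by simpa), List.getD_eq_getElem _ _ h, List.getElem_map]


/-! ### The three transfer lemmas for the rotation -/

/-- Up step strictly before the rotated down step, not matched with it. -/
lemma branchA_ne (P Q : List Bool) (aL sL : ℕ) (shA : ℤ)
    (hPQlow : ∀ k, k ≤ aL → ht Q k = ht P k)
    (hPmidlb : ∀ m, aL < m → m ≤ aL + 1 + sL → shA - 1 ≤ ht P m)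
    (hQmidlb : ∀ m, aL < m → m ≤ aL + sL → shA ≤ ht Q m)
    (hPQhigh : ∀ m, aL + 1 + sL ≤ m → ht Q m = ht P m)
    (ha1 : ht P (aL + 1) = shA - 1)
    (jP : ℕ) (hja : jP < aL)
    (hjPlen : jP < P.length) (huP : P.getD jP false = true) (hendP : sht P ≤ ht P jP)
    (h0P : 0 ≤ ht P jP)
    (j₀ : ℕ) (hj₀len : j₀ < P.length) (hu₀ : P.getD j₀ false = true)
    (hj₀a : j₀ < aL) (hfr₀ : fr P j₀ = aL + 1) (hc₀ : ht P j₀ = shA - 1)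
    (hne0 : jP ≠ j₀)
    (hjQlen : jP < Q.length) (huQ : Q.getD jP false = true) (hshtQ : sht Q = 0) :
    excLen Q jP = excLen P jP := by
  have specP := excLen_spec P hjPlen huP hendP
  obtain ⟨eP, heP1, heP2, heP3⟩ := fr_nonempty P hjPlen huP hendP
  have frmemP := fr_mem P ⟨eP, heP1, heP3⟩
  have hQjP : ht Q jP = ht P jP := hPQlow jP (by omega)
  have hEne : fr P jP ≠ aL + 1 := by
    intro h
    have hfrc : ht P (aL + 1) = ht P jP := by rw [← h]; exact frmemP.2
    rcases lt_trichotomy jP j₀ with hlt | heq | hgt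
    · have := fr_above P hjPlen huP hlt (by omega)
      omega
    · exact hne0 heq
    · have := fr_above P hj₀len hu₀ hgt (by rw [hfr₀]; omega)
      omega
  have hEnm : ¬ (aL + 1 < fr P jP ∧ fr P jP ≤ aL + 1 + sL) := by
    rintro ⟨h1, h2⟩
    have hab := fr_above P hjPlen huP (show jP < aL + 1 by omega) h1
    have hmid := hPmidlb (fr P jP) (by omega) h2
    have hfm := frmemP.2
    omega
  have hendQ : sht Q ≤ ht Q jP := by rw [hshtQ]; omega
  have specQ := excLen_spec Q hjQlen huQ hendQ
  rcases le_or_gt (fr P jP) aL with hcase | hcase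
  · have hfrQ : fr Q jP = fr P jP := by
      refine fr_eq Q frmemP.1 ?_ ?_
      · rw [hPQlow _ hcase, frmemP.2, hQjP]
      · intro m h1 h2
        have hQm : ht Q m = ht P m := hPQlow m (by omega)
        have := fr_above P hjPlen huP h1 (by omega)
        omega
    omega
  · have hcase2 : aL + 1 + sL + 1 ≤ fr P jP := by omega
    have hhPQ : ht Q (fr P jP) = ht P (fr P jP) := hPQhigh _ (by omega)
    have habove1 := fr_above P hjPlen huP (show jP < aL + 1 by omega) (by omega)
    have hfm := frmemP.2
    have hfrQ : fr Q jP = fr P jP := by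
      refine fr_eq Q frmemP.1 ?_ ?_
      · omega
      · intro m h1 h2
        rcases le_or_gt m aL with hm | hm
        · have hQm : ht Q m = ht P m := hPQlow m hm
          have := fr_above P hjPlen huP h1 (by omega)
          omega
        · rcases le_or_gt m (aL + sL) with hm2 | hm2
          · have hQm := hQmidlb m hm hm2
            omega
          · have hQm : ht Q m = ht P m := hPQhigh m (by omega)
            have := fr_above P hjPlen huP h1 (by omega)
            omega
    omega

/-- The up step matched with the rotated down step. -/
lemma branchI0 (P Q : List Bool) (aL sL : ℕ) (shA : ℤ)
    (hPQlow : ∀ k, k ≤ aL → ht Q k = ht P k)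
    (hQmidlb : ∀ m, aL < m → m ≤ aL + sL → shA ≤ ht Q m)
    (hQhigh0 : ht Q (aL + 1 + sL) = shA - 1)
    (jP : ℕ) (hja : jP < aL)
    (hjPlen : jP < P.length) (huP : P.getD jP false = true) (hendP : sht P ≤ ht P jP)
    (hfrP : fr P jP = aL + 1) (hcj : ht P jP = shA - 1)
    (hjQlen : jP < Q.length) (huQ : Q.getD jP false = true) (hshtQ : sht Q = 0)
    (hA1 : 1 ≤ shA) :
    excLen Q jP = excLen P jP + sL := by
  have specP := excLen_spec P hjPlen huP hendP
  have hQjP : ht Q jP = shA - 1 := by rw [hPQlow jP (by omega)]; exact hcj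
  have hfrQ : fr Q jP = aL + 1 + sL := by
    refine fr_eq Q (by omega) ?_ ?_
    · omega
    · intro m h1 h2
      rcases le_or_gt m aL with hm | hm
      · have hQm : ht Q m = ht P m := hPQlow m hm
        have hab := fr_above P hjPlen huP h1 (by omega)
        omega
      · have hQm := hQmidlb m hm (by omega)
        omega
  have hendQ : sht Q ≤ ht Q jP := by rw [hshtQ]; omega
  have specQ := excLen_spec Q hjQlen huQ hendQ
  omega

/-- Up steps inside the moved excursion S. -/
lemma branchS (P Q S : List Bool) (aL : ℕ) (shA : ℤ)
    (hPmid : ∀ t ≤ S.length, ht P (aL + 1 + t) = shA - 1 + ht S t)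
    (hQmid : ∀ t ≤ S.length, ht Q (aL + t) = shA + ht S t)
    (hSpre : ∀ k, 0 ≤ ht S k) (hSbal : sht S = 0) (hA1 : 1 ≤ shA)
    (hshtQ : sht Q = 0) (hPbal : sht P = 0) (hPpre : ∀ k, 0 ≤ ht P k)
    (t : ℕ) (htlen : t < S.length) (hut : S.getD t false = true)
    (jP jQ : ℕ) (hjPv : jP = aL + 1 + t) (hjQv : jQ = aL + t)
    (hjPlen : jP < P.length) (huP : P.getD jP false = true)
    (hjQlen : jQ < Q.length) (huQ : Q.getD jQ false = true) :
    excLen Q jQ = excLen P jP := by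
  have hendP : sht P ≤ ht P jP := by rw [hPbal]; exact hPpre jP
  have specP := excLen_spec P hjPlen huP hendP
  have hendS : sht S ≤ ht S t := by rw [hSbal]; exact hSpre t
  obtain ⟨eS, heS1, heS2, heS3⟩ := fr_nonempty S htlen hut hendS
  have frmemS := fr_mem S ⟨eS, heS1, heS3⟩
  have hfs1 := frmemS.1
  have hfs2 := frmemS.2
  have hfrSle : fr S t ≤ S.length := le_trans (fr_le S heS1 heS3) heS2
  have hfrP : fr P jP = aL + 1 + fr S t := by
    refine fr_eq P (by omega) ?_ ?_
    · have h1 := hPmid (fr S t) hfrSle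
      have h2 := hPmid t (by omega)
      rw [hjPv]
      omega
    · intro m h1 h2
      have hmv := hPmid (m - (aL + 1)) (by omega)
      rw [show aL + 1 + (m - (aL + 1)) = m by omega] at hmv
      have h2' := hPmid t (by omega)
      have hab := fr_above S htlen hut (show t < m - (aL + 1) by omega) (by omega)
      rw [hjPv]
      omega
  have hfrQ : fr Q jQ = aL + fr S t := by
    refine fr_eq Q (by omega) ?_ ?_
    · have h1 := hQmid (fr S t) hfrSle
      have h2 := hQmid t (by omega)
      rw [hjQv]
      omega
    · intro m h1 h2
      have hmv := hQmid (m - aL) (by omega)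
      rw [show aL + (m - aL) = m by omega] at hmv
      have h2' := hQmid t (by omega)
      have hab := fr_above S htlen hut (show t < m - aL by omega) (by omega)
      rw [hjQv]
      omega
  have hendQ : sht Q ≤ ht Q jQ := by
    rw [hshtQ, hjQv]
    have h1 := hQmid t (by omega)
    have h2 := hSpre t
    omega
  have specQ := excLen_spec Q hjQlen huQ hendQ
  omega

/-- Up steps after the moved excursion. -/
lemma branchB (P Q : List Bool) (W : ℕ)
    (hPQ : ∀ m, W ≤ m → ht Q m = ht P m)
    (jP : ℕ) (hjW : W ≤ jP)
    (hjPlen : jP < P.length) (huP : P.getD jP false = true) (hendP : sht P ≤ ht P jP)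
    (h0P : 0 ≤ ht P jP)
    (hjQlen : jP < Q.length) (huQ : Q.getD jP false = true) (hshtQ : sht Q = 0) :
    excLen Q jP = excLen P jP := by
  have specP := excLen_spec P hjPlen huP hendP
  obtain ⟨eP, heP1, heP2, heP3⟩ := fr_nonempty P hjPlen huP hendP
  have frmemP := fr_mem P ⟨eP, heP1, heP3⟩
  have hcj : ht Q jP = ht P jP := hPQ jP hjW
  have hfrQ : fr Q jP = fr P jP := by
    refine fr_eq Q frmemP.1 ?_ ?_
    · have h1 : ht Q (fr P jP) = ht P (fr P jP) := hPQ _ (by omega)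
      have h2 := frmemP.2
      omega
    · intro m h1 h2
      have hQm : ht Q m = ht P m := hPQ m (by omega)
      have := fr_above P hjPlen huP h1 (by omega)
      omega
  have hendQ : sht Q ≤ ht Q jP := by rw [hshtQ]; omega
  have specQ := excLen_spec Q hjQlen huQ hendQ
  omega

set_option maxHeartbeats 1000000 in
/-- Let P be a Dyck path of size n and let Q be obtained from P by a Tamari rotation:
P = A ++ D ++ S ++ B and Q = A ++ S ++ D ++ B, where the down step d = D sits at position
A.length, and S is the excursion of the up step u following d (a nonempty Dyck word none of
whose proper nonempty prefixes is a Dyck word). Let i₀ be the rank (0-indexed) of the up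
step matched with d in P, i.e. whose excursion ends exactly at d. Then D_Q(i) = D_P(i) for
all i ≠ i₀, and D_Q(i₀) = D_P(i₀) + ℓ_P(u), where ℓ_P(u) = (number of up steps of S). -/
theorem distFn_rotation (n : ℕ) (P Q A S B : List Bool)
    (hP : IsDyckWord P) (hPn : P.length = 2*n)
    (hS : IsDyckWord S) (hSne : S ≠ [])
    (hSmin : ∀ k, 0 < k → k < S.length → ¬ IsDyckWord (S.take k))
    (hPdec : P = A ++ false :: (S ++ B))
    (hQdec : Q = A ++ S ++ false :: B)
    (i₀ : ℕ) (hi₀ : i₀ < n)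
    (hmatch : (upPos P).getD i₀ 0 + excLen P ((upPos P).getD i₀ 0) = A.length + 1) :
    (∀ i < n, i ≠ i₀ → distFn Q i = distFn P i)
    ∧ distFn Q i₀ = distFn P i₀ + S.count true := by
  classical
  obtain ⟨hPbal, hPpre⟩ := (isDyck_iff P).1 hP
  obtain ⟨hSbal, hSpre⟩ := (isDyck_iff S).1 hS
  have hPlen : P.length = A.length + 1 + S.length + B.length := by
    rw [hPdec]; simp [List.length_append]; omega
  have hQlen : Q.length = A.length + 1 + S.length + B.length := by
    rw [hQdec]; simp [List.length_append]; omega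
  have hcountP : P.count true = n := by
    have h1 := count_add_count P
    have h2 := hP.1
    omega
  have hcountsum : A.count true + S.count true + B.count true = n := by
    rw [hPdec] at hcountP
    simp [List.count_append, List.count_cons] at hcountP
    omega
  have hcountQ : Q.count true = n := by
    rw [hQdec]
    simp [List.count_append, List.count_cons]
    omega
  have hUP : (upPos P).length = n := by rw [upPos_length, hcountP]
  have hUQ : (upPos Q).length = n := by rw [upPos_length, hcountQ]
  have hshtQ : sht Q = 0 := by
    rw [hPdec] at hPbal
    rw [hQdec]
    rw [sht_append, sht_cons] at hPbal
    rw [sht_append, sht_append, sht_cons] at *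
    simp at *
    omega
  -- instantiated height decomposition facts
  have hPlow : ∀ k, k ≤ A.length → ht P k = ht A k := fun k h => by
    rw [hPdec]; exact htP_low A S B h
  have hQlow : ∀ k, k ≤ A.length → ht Q k = ht A k := fun k h => by
    rw [hQdec]; exact htQ_low A S B h
  have hPmid : ∀ t, t ≤ S.length → ht P (A.length + 1 + t) = sht A - 1 + ht S t := fun t h => by
    rw [hPdec]; exact htP_mid A S B h
  have hQmid : ∀ t, t ≤ S.length → ht Q (A.length + t) = sht A + ht S t := fun t h => by
    rw [hQdec]; exact htQ_mid A S B h
  have hPhigh : ∀ r, ht P (A.length + 1 + S.length + r) = sht A - 1 + ht B r := fun r => by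
    rw [hPdec]
    have := htP_high A S B r
    rw [hSbal] at this
    simpa using this
  have hQhigh : ∀ r, ht Q (A.length + 1 + S.length + r) = sht A - 1 + ht B r := fun r => by
    rw [hQdec]
    have := htQ_high A S B r
    rw [hSbal] at this
    simpa using this
  have hUPdec : upPos P = upPos A ++
      ((upPos S).map (fun t => A.length + 1 + t) ++
       (upPos B).map (fun r => A.length + 1 + S.length + r)) := by
    rw [hPdec]; exact upPos_P_dec A S B
  have hUQdec : upPos Q = upPos A ++
      ((upPos S).map (fun t => A.length + t) ++
       (upPos B).map (fun r => A.length + 1 + S.length + r)) := by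
    rw [hQdec]; exact upPos_Q_dec A S B
  have huAlen : (upPos A).length = A.count true := upPos_length A
  have huSlen : (upPos S).length = S.count true := upPos_length S
  have huBlen : (upPos B).length = B.count true := upPos_length B
  have ha1 : ht P (A.length + 1) = sht A - 1 := by
    have := hPmid 0 (Nat.zero_le _)
    rw [ht_zero] at this
    simpa using this
  have hA1 : 1 ≤ sht A := by
    have h1 := hPpre (A.length + 1)
    omega
  have hgetPa : P.getD A.length false = false := by
    rw [hPdec, List.getD_append_right _ _ _ _ (le_refl _)]
    simp
  -- the i₀ up step
  have hj₀mem : (upPos P).getD i₀ 0 ∈ upPos P := by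
    rw [List.getD_eq_getElem _ _ (by rw [hUP]; exact hi₀)]
    exact List.getElem_mem _
  obtain ⟨hj₀len, hu₀⟩ := mem_upPos.1 hj₀mem
  have hend₀ : sht P ≤ ht P ((upPos P).getD i₀ 0) := by rw [hPbal]; exact hPpre _
  have spec₀ := excLen_spec P hj₀len hu₀ hend₀
  have hfr₀ : fr P ((upPos P).getD i₀ 0) = A.length + 1 := by omega
  have hj₀a : (upPos P).getD i₀ 0 < A.length := by
    have h1 : (upPos P).getD i₀ 0 < A.length + 1 := by omega
    rcases Nat.lt_or_ge ((upPos P).getD i₀ 0) A.length with h | h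
    · exact h
    · exfalso
      have : (upPos P).getD i₀ 0 = A.length := by omega
      rw [this] at hu₀
      rw [hgetPa] at hu₀
      exact absurd hu₀ (by simp)
  have hc₀ : ht P ((upPos P).getD i₀ 0) = sht A - 1 := by
    obtain ⟨e₀, he1, he2, he3⟩ := fr_nonempty P hj₀len hu₀ hend₀
    have h2 := (fr_mem P ⟨e₀, he1, he3⟩).2
    rw [hfr₀] at h2
    omega
  have hi₀A : i₀ < A.count true := by
    by_contra hcon
    push_neg at hcon
    rcases Nat.lt_or_ge i₀ (A.count true + S.count true) with h | h
    · have hv : (upPos P).getD i₀ 0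
          = A.length + 1 + (upPos S).getD (i₀ - A.count true) 0 := by
        rw [hUPdec, List.getD_append_right _ _ _ _ (by rw [huAlen]; omega),
          List.getD_append _ _ _ _ (by rw [List.length_map, huSlen, huAlen]; omega),
          getD_map_nat _ _ (by rw [huSlen, huAlen]; omega)]
        rw [huAlen]
      omega
    · have hv : (upPos P).getD i₀ 0
          = A.length + 1 + S.length + (upPos B).getD (i₀ - A.count true - S.count true) 0 := by
        rw [hUPdec, List.getD_append_right _ _ _ _ (by rw [huAlen]; omega),
          List.getD_append_right _ _ _ _ (by rw [List.length_map, huSlen, huAlen]; omega),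
          getD_map_nat _ _ (by rw [huBlen, List.length_map, huSlen, huAlen]; omega)]
        rw [huAlen, List.length_map, huSlen]
      omega
  -- distinctness of up positions
  have hinj : ∀ i, i < n → i ≠ i₀ → (upPos P).getD i 0 ≠ (upPos P).getD i₀ 0 := by
    intro i h1 h2
    rw [List.getD_eq_getElem _ _ (by rw [hUP]; exact h1),
      List.getD_eq_getElem _ _ (by rw [hUP]; exact hi₀)]
    have hp := List.pairwise_iff_getElem.1 (upPos_pairwise P)
    rcases Nat.lt_or_ge i i₀ with h | h
    · exact Nat.ne_of_lt (hp _ _ _ _ h)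
    · have h3 : i₀ < i := by omega
      exact (Nat.ne_of_lt (hp _ _ _ _ h3)).symm
  -- combined height-comparison facts
  have hPQlow : ∀ k, k ≤ A.length → ht Q k = ht P k := by
    intro k h
    rw [hQlow k h, hPlow k h]
  have hPmidlb : ∀ m, A.length < m → m ≤ A.length + 1 + S.length → sht A - 1 ≤ ht P m := by
    intro m h1 h2
    have h3 := hPmid (m - (A.length + 1)) (by omega)
    rw [show A.length + 1 + (m - (A.length + 1)) = m by omega] at h3
    have := hSpre (m - (A.length + 1))
    omega
  have hQmidlb : ∀ m, A.length < m → m ≤ A.length + S.length → sht A ≤ ht Q m := by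
    intro m h1 h2
    have h3 := hQmid (m - A.length) (by omega)
    rw [show A.length + (m - A.length) = m by omega] at h3
    have := hSpre (m - A.length)
    omega
  have hPQhigh : ∀ m, A.length + 1 + S.length ≤ m → ht Q m = ht P m := by
    intro m h
    have h1 := hPhigh (m - (A.length + 1 + S.length))
    have h2 := hQhigh (m - (A.length + 1 + S.length))
    rw [show A.length + 1 + S.length + (m - (A.length + 1 + S.length)) = m by omega] at h1 h2
    omega
  have hQhigh0 : ht Q (A.length + 1 + S.length) = sht A - 1 := by
    have := hQhigh 0
    rw [ht_zero] at this
    simpa using this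
  have key : ∀ i, i < n →
      ((i ≠ i₀ → excLen Q ((upPos Q).getD i 0) = excLen P ((upPos P).getD i 0)) ∧
       (i = i₀ → excLen Q ((upPos Q).getD i 0) = excLen P ((upPos P).getD i 0) + S.length)) := by
    intro i hi
    obtain ⟨jP, hjPd⟩ : ∃ j, (upPos P).getD i 0 = j := ⟨_, rfl⟩
    obtain ⟨jQ, hjQd⟩ : ∃ j, (upPos Q).getD i 0 = j := ⟨_, rfl⟩
    rw [hjPd, hjQd]
    have hjPmem : jP ∈ upPos P := by
      rw [← hjPd, List.getD_eq_getElem _ _ (by rw [hUP]; exact hi)]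
      exact List.getElem_mem _
    obtain ⟨hjPlen, huP⟩ := mem_upPos.1 hjPmem
    have hjQmem : jQ ∈ upPos Q := by
      rw [← hjQd, List.getD_eq_getElem _ _ (by rw [hUQ]; exact hi)]
      exact List.getElem_mem _
    obtain ⟨hjQlen, huQ⟩ := mem_upPos.1 hjQmem
    have hendP : sht P ≤ ht P jP := by rw [hPbal]; exact hPpre jP
    by_cases hii : i = i₀
    · subst hii
      have hjQP : jQ = jP := by
        rw [← hjPd, ← hjQd, hUPdec, hUQdec,
          List.getD_append _ _ _ _ (by rw [huAlen]; exact hi₀A),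
          List.getD_append _ _ _ _ (by rw [huAlen]; exact hi₀A)]
      rw [hjQP] at hjQlen huQ ⊢
      refine ⟨fun h => absurd rfl h, fun _ => ?_⟩
      have hfrP : fr P jP = A.length + 1 := by rw [← hjPd]; exact hfr₀
      have hja : jP < A.length := by rw [← hjPd]; exact hj₀a
      have hcj : ht P jP = sht A - 1 := by rw [← hjPd]; exact hc₀
      exact branchI0 P Q A.length S.length (sht A) hPQlow hQmidlb hQhigh0 jP hja
        hjPlen huP hendP hfrP hcj hjQlen huQ hshtQ hA1
    · refine ⟨fun _ => ?_, fun h => absurd h hii⟩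
      rcases Nat.lt_or_ge i (A.count true) with hiA | hge
      · -- branch A
        have hjQP : jQ = jP := by
          rw [← hjPd, ← hjQd, hUPdec, hUQdec,
            List.getD_append _ _ _ _ (by rw [huAlen]; exact hiA),
            List.getD_append _ _ _ _ (by rw [huAlen]; exact hiA)]
        rw [hjQP] at hjQlen huQ ⊢
        have hja : jP < A.length := by
          have hmemA : jP ∈ upPos A := by
            rw [← hjPd, hUPdec, List.getD_append _ _ _ _ (by rw [huAlen]; exact hiA),
              List.getD_eq_getElem _ _ (by rw [huAlen]; exact hiA)]
            exact List.getElem_mem _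
          exact (mem_upPos.1 hmemA).1
        have hne0 : jP ≠ (upPos P).getD i₀ 0 := by rw [← hjPd]; exact hinj i hi hii
        exact branchA_ne P Q A.length S.length (sht A) hPQlow hPmidlb hQmidlb hPQhigh ha1
          jP hja hjPlen huP hendP (hPpre jP) ((upPos P).getD i₀ 0) hj₀len hu₀ hj₀a hfr₀ hc₀
          hne0 hjQlen huQ hshtQ
      · rcases Nat.lt_or_ge i (A.count true + S.count true) with hiS | hiB
        · -- branch S
          obtain ⟨t, htd⟩ : ∃ t, (upPos S).getD (i - A.count true) 0 = t := ⟨_, rfl⟩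
          have hjPv : jP = A.length + 1 + t := by
            rw [← hjPd, hUPdec, List.getD_append_right _ _ _ _ (by rw [huAlen]; omega),
              List.getD_append _ _ _ _ (by rw [List.length_map, huSlen, huAlen]; omega),
              getD_map_nat _ _ (by rw [huSlen, huAlen]; omega), huAlen, htd]
          have hjQv : jQ = A.length + t := by
            rw [← hjQd, hUQdec, List.getD_append_right _ _ _ _ (by rw [huAlen]; omega),
              List.getD_append _ _ _ _ (by rw [List.length_map, huSlen, huAlen]; omega),
              getD_map_nat _ _ (by rw [huSlen, huAlen]; omega), huAlen, htd]
          have htmem : t ∈ upPos S := by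
            rw [← htd, List.getD_eq_getElem _ _ (by rw [huSlen]; omega)]
            exact List.getElem_mem _
          obtain ⟨htlen, hut⟩ := mem_upPos.1 htmem
          exact branchS P Q S A.length (sht A) hPmid hQmid hSpre hSbal hA1 hshtQ hPbal hPpre
            t htlen hut jP jQ hjPv hjQv hjPlen huP hjQlen huQ
        · -- branch B
          obtain ⟨r, hrd⟩ : ∃ r, (upPos B).getD (i - A.count true - S.count true) 0 = r :=
            ⟨_, rfl⟩
          have hjPv : jP = A.length + 1 + S.length + r := by
            rw [← hjPd, hUPdec, List.getD_append_right _ _ _ _ (by rw [huAlen]; omega),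
              List.getD_append_right _ _ _ _ (by rw [List.length_map, huSlen, huAlen]; omega),
              getD_map_nat _ _ (by rw [huBlen, List.length_map, huSlen, huAlen]; omega),
              huAlen, List.length_map, huSlen, hrd]
          have hjQv : jQ = A.length + 1 + S.length + r := by
            rw [← hjQd, hUQdec, List.getD_append_right _ _ _ _ (by rw [huAlen]; omega),
              List.getD_append_right _ _ _ _ (by rw [List.length_map, huSlen, huAlen]; omega),
              getD_map_nat _ _ (by rw [huBlen, List.length_map, huSlen, huAlen]; omega),
              huAlen, List.length_map, huSlen, hrd]
          have hjQP : jQ = jP := by rw [hjPv, hjQv]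
          rw [hjQP] at hjQlen huQ ⊢
          exact branchB P Q (A.length + 1 + S.length) hPQhigh jP (by omega)
            hjPlen huP hendP (hPpre jP) hjQlen huQ hshtQ
  have hSlen2 : S.length = 2 * S.count true := by
    have := sht_add_length S
    rw [hSbal] at this
    omega
  constructor
  · intro i hilt hine
    simp only [distFn]
    rw [(key i hilt).1 hine]
  · have hev := excLen_even P hj₀len hu₀ hend₀
    obtain ⟨m, hm⟩ := hev
    simp only [distFn]
    rw [(key i₀ hi₀).2 rfl, hm, hSlen2]
    omega
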